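/- (Strong convergence lemma.) Let H be a complex Hilbert space, q ∈ ℝ with −1 < q < 1, and α a bounded operator on H satisfying α α* − q² α* α = (1 − q²)·1; set Γ := 1 − α* α. If Γ is injective, then α^k → 0 in the strong operator topology, i.e., for every ξ ∈ H one has ‖α^k ξ‖ → 0 as k → ∞. -/

import Mathlib

open ContinuousLinearMap Filter

/-- **Strong convergence lemma.** If `Γ = 1 − α* α` is injective, then `α^k → 0`
strongly. -/
theorem qCCR_pow_tendsto_zero
    {H : Type*} [NormedAddCommGroup H] [InnerProductSpace ℂ H] [CompleteSpace H]
    (q : ℝ) (hq : -1 < q) (hq' : q < 1)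
    (α : H →L[ℂ] H)
    (hccr : α * adjoint α - ((q : ℂ) ^ 2) • (adjoint α * α) =
      ((1 : ℂ) - (q : ℂ) ^ 2) • (1 : H →L[ℂ] H))
    (hinj : Function.Injective ((1 : H →L[ℂ] H) - adjoint α * α)) :
    ∀ ξ : H, Tendsto (fun k : ℕ => ‖(α ^ k) ξ‖) atTop (nhds 0) := by
  have hq2 : q ^ 2 < 1 := by nlinarith
  have hq2' : (0:ℝ) ≤ q ^ 2 := sq_nonneg q
  set Γ : H →L[ℂ] H := (1 : H →L[ℂ] H) - adjoint α * α with hΓ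
  -- rearranged CCR
  have h2 : α * adjoint α = ((q:ℂ)^2) • (adjoint α * α) + ((1:ℂ)-(q:ℂ)^2) • (1:H→L[ℂ]H) := by
    have h := sub_eq_iff_eq_add.mp hccr
    rw [h, add_comm]
  have hna : ‖adjoint α‖ = ‖α‖ := adjoint.norm_map α
  have e1 : ‖α * adjoint α‖ = ‖α‖ * ‖α‖ := by
    have h := norm_adjoint_comp_self (adjoint α)
    rw [adjoint_adjoint, hna] at h
    exact h
  have hqn : ‖((q:ℂ)^2)‖ = q ^ 2 := by
    rw [norm_pow, Complex.norm_real, Real.norm_eq_abs, sq_abs]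
  -- `α` is a contraction
  have hnorm : ‖α‖ ≤ 1 := by
    have e2 : ‖α * adjoint α‖ ≤ q^2 * (‖α‖*‖α‖) + (1 - q^2) := by
      rw [h2]
      refine (norm_add_le _ _).trans ?_
      gcongr
      · rw [norm_smul, hqn]
        gcongr
        exact (norm_mul_le _ _).trans (by rw [hna])
      · rw [norm_smul]
        have : ‖(1:ℂ) - (q:ℂ)^2‖ = 1 - q^2 := by
          rw [show (1:ℂ) - (q:ℂ)^2 = ((1 - q^2 : ℝ) : ℂ) by push_cast; ring,
            Complex.norm_real, Real.norm_eq_abs, abs_of_nonneg (by linarith)]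
        rw [this]
        calc (1-q^2) * ‖(1:H→L[ℂ]H)‖ ≤ (1-q^2) * 1 := by
              gcongr
              exact norm_id_le
          _ = 1 - q^2 := mul_one _
    rw [e1] at e2
    have hX : ‖α‖ * ‖α‖ ≤ 1 := by nlinarith
    nlinarith [norm_nonneg α]
  -- powers of a contraction
  have hcontr : ∀ (k : ℕ) (ζ : H), ‖(α ^ k) ζ‖ ≤ ‖ζ‖ := by
    intro k
    induction k with
    | zero => intro ζ; simp
    | succ n ih =>
      intro ζ
      rw [pow_succ, mul_apply_eq_comp]
      calc ‖(α ^ n) (α ζ)‖ ≤ ‖α ζ‖ := ih _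
        _ ≤ ‖α‖ * ‖ζ‖ := α.le_opNorm ζ
        _ ≤ 1 * ‖ζ‖ := by gcongr
        _ = ‖ζ‖ := one_mul _
  -- commutation relation
  have key : α * Γ = ((q:ℂ)^2) • (Γ * α) := by
    rw [hΓ, mul_sub, mul_one, ← mul_assoc, h2]
    simp only [add_mul, smul_mul_assoc, one_mul, sub_mul, smul_sub, sub_smul, one_smul, mul_assoc]
    abel
  have keypow : ∀ k : ℕ, α ^ k * Γ = (((q:ℂ)^2)^k) • (Γ * α ^ k) := by
    intro k
    induction k with
    | zero => simp
    | succ n ih =>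
      rw [pow_succ, mul_assoc, key, mul_smul_comm, ← mul_assoc, ih, smul_mul_assoc,
        mul_assoc, ← pow_succ, pow_succ, smul_smul]
      ring_nf
  -- `Γ` is self-adjoint
  have hsa : adjoint Γ = Γ := by
    rw [hΓ, ← star_eq_adjoint]
    simp [star_sub, star_one, star_mul, star_eq_adjoint, adjoint_adjoint]
  -- `Γ` has dense range
  have hdense : Dense (Set.range Γ) := by
    have hdense' : (LinearMap.range (Γ : H →ₗ[ℂ] H)).topologicalClosure = ⊤ := by
      rw [Submodule.topologicalClosure_eq_top_iff, Submodule.eq_bot_iff]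
      intro x hx
      have hx0 : Γ x = 0 := by
        have h1 : inner ℂ (Γ (Γ x)) x = (0:ℂ) := hx _ (LinearMap.mem_range_self _ _)
        have h2' : inner ℂ (Γ x) (Γ x) = (0:ℂ) := by
          rw [← adjoint_inner_left Γ x (Γ x), hsa]; exact h1
        exact inner_self_eq_zero.mp h2'
      exact hinj (by simpa using hx0)
    have h3 : closure ((LinearMap.range (Γ : H →ₗ[ℂ] H) : Submodule ℂ H) : Set H) = Set.univ := by
      rw [← Submodule.topologicalClosure_coe, hdense']; rfl
    have h4 : Dense ((LinearMap.range (Γ : H →ₗ[ℂ] H) : Submodule ℂ H) : Set H) :=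
      dense_iff_closure_eq.mpr h3
    simpa [LinearMap.coe_range] using h4
  -- conclusion
  intro ξ
  rw [Metric.tendsto_atTop]
  intro ε hε
  obtain ⟨η, ⟨ζ, rfl⟩, hηd⟩ := hdense.exists_dist_lt ξ (half_pos hε)
  -- eventually the geometric term is small
  have hgeo : Tendsto (fun n : ℕ => (q^2)^n * (‖Γ‖ * ‖ζ‖)) atTop (nhds 0) := by
    simpa using (tendsto_pow_atTop_nhds_zero_of_lt_one hq2' hq2).mul_const (‖Γ‖ * ‖ζ‖)
  obtain ⟨N, hN⟩ := (Metric.tendsto_atTop.mp hgeo) (ε/2) (half_pos hε)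
  refine ⟨N, fun n hn => ?_⟩
  have hb1 : ‖(α ^ n) (ξ - Γ ζ)‖ ≤ ‖ξ - Γ ζ‖ := hcontr n _
  have hb2 : ‖(α ^ n) (Γ ζ)‖ ≤ (q^2)^n * (‖Γ‖ * ‖ζ‖) := by
    have hap : (α ^ n) (Γ ζ) = (((q:ℂ)^2)^n) • (Γ ((α ^ n) ζ)) := by
      have := congrArg (fun T : H →L[ℂ] H => T ζ) (keypow n)
      simpa [mul_apply_eq_comp] using this
    rw [hap, norm_smul, norm_pow, hqn]
    have h5 : ‖Γ ((α ^ n) ζ)‖ ≤ ‖Γ‖ * ‖ζ‖ :=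
      (Γ.le_opNorm _).trans (mul_le_mul_of_nonneg_left (hcontr n ζ) (norm_nonneg Γ))
    have h6 : (0:ℝ) ≤ (q^2)^n := pow_nonneg hq2' n
    calc (q^2)^n * ‖Γ ((α ^ n) ζ)‖ ≤ (q^2)^n * (‖Γ‖ * ‖ζ‖) :=
          mul_le_mul_of_nonneg_left h5 h6
      _ = (q^2)^n * (‖Γ‖ * ‖ζ‖) := rfl
  have hsplit : ‖(α ^ n) ξ‖ ≤ ‖(α ^ n) (ξ - Γ ζ)‖ + ‖(α ^ n) (Γ ζ)‖ := by
    have : (α ^ n) ξ = (α ^ n) (ξ - Γ ζ) + (α ^ n) (Γ ζ) := by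
      rw [← map_add]; congr 1; abel
    rw [this]; exact norm_add_le _ _
  have hgn : (q^2)^n * (‖Γ‖ * ‖ζ‖) < ε/2 := by
    have := hN n hn
    rw [Real.dist_eq, sub_zero] at this
    calc (q^2)^n * (‖Γ‖ * ‖ζ‖) ≤ |(q^2)^n * (‖Γ‖ * ‖ζ‖)| := le_abs_self _
      _ < ε/2 := this
  have hd : ‖ξ - Γ ζ‖ < ε/2 := by rwa [← dist_eq_norm]
  rw [Real.dist_eq, sub_zero, abs_of_nonneg (norm_nonneg _)]
  calc ‖(α ^ n) ξ‖ ≤ ‖(α ^ n) (ξ - Γ ζ)‖ + ‖(α ^ n) (Γ ζ)‖ := hsplit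
    _ ≤ ‖ξ - Γ ζ‖ + (q^2)^n * (‖Γ‖ * ‖ζ‖) := add_le_add hb1 hb2
    _ < ε/2 + ε/2 := add_lt_add hd hgn
    _ = ε := add_halves ε
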